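/- Let R(A,B,C) be a (2,2,2)-pole obtained from a snark G by deleting an edge uv (giving connectors A and B at u and v) and severing another edge e not incident with u or v (giving connector C). Then R admits no proper 3-edge-colouring φ with φ*(A) ≠ 0 and φ*(C) = 0. Consequently, if N(I,O) is a negator, T1(B1,C1) and T2(B2,C2) are proper (2,3)-poles, and the 9-pole M3 is formed by joining B1 to A, C to I, and O to B2, then M3 is uncolourable. -/

import Mathlib

/-- The Klein four-group `Z₂ × Z₂`; Tait colourings use its three nonzero
elements as colours. -/
abbrev Klein : Type := ZMod 2 × ZMod 2

/-- A (cubic) multipole: a finite set of vertices and edges, where each edge has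
two ends (`fst` and `snd`), each of which is either incident with a vertex
(`some v`) or free (`none`), the latter being a *semiedge*. -/
structure Multipole where
  V : Type
  E : Type
  [instVF : Fintype V]
  [instEF : Fintype E]
  [instVD : DecidableEq V]
  [instED : DecidableEq E]
  fst : E → Option V
  snd : E → Option V

attribute [instance] Multipole.instVF Multipole.instEF Multipole.instVD Multipole.instED

namespace Multipole

variable (M : Multipole)

/-- The end of edge `e` on side `b`. -/
def endAt (e : M.E) (b : Bool) : Option M.V := if b then M.fst e else M.snd e

/-- The number of edge ends incident with `v`. -/
def degree (v : M.V) : ℕ :=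
  (Finset.univ.filter fun p : M.E × Bool => M.endAt p.1 p.2 = some v).card

/-- Every vertex is incident with exactly three edge ends. -/
def IsCubic : Prop := ∀ v : M.V, M.degree v = 3

/-- No semiedges: every edge end is incident with a vertex (i.e. `M` is a graph). -/
def Closed : Prop := ∀ (e : M.E) (b : Bool), M.endAt e b ≠ none

/-- Edge `e` joins vertices `x` and `y`. -/
def Joins (e : M.E) (x y : M.V) : Prop :=
  (M.fst e = some x ∧ M.snd e = some y) ∨ (M.fst e = some y ∧ M.snd e = some x)

def Adj (x y : M.V) : Prop := ∃ e : M.E, M.Joins e x y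

def Conn : Prop := ∀ x y : M.V, Relation.ReflTransGen M.Adj x y

/-- A proper 3-edge-colouring (Tait colouring): every edge gets a nonzero
element of the Klein group and the edge ends meeting at any vertex get
pairwise distinct colours. -/
def Proper (φ : M.E → Klein) : Prop :=
  (∀ e, φ e ≠ 0) ∧
  ∀ (v : M.V) (p q : M.E × Bool),
    M.endAt p.1 p.2 = some v → M.endAt q.1 q.2 = some v → p ≠ q → φ p.1 ≠ φ q.1

def Colourable : Prop := ∃ φ : M.E → Klein, M.Proper φ

/-- A colouring viewed as a nowhere-zero `Z₂ × Z₂`-flow: nonzero colours whose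
sum at each vertex is `0`.  At 3-valent vertices this is equivalent to
properness; at a 2-valent vertex it forces the two incident edges to receive
equal colours, which is exactly the condition for the colouring to descend to
the cubic graph obtained by suppressing that vertex. -/
def ProperFlow (φ : M.E → Klein) : Prop :=
  (∀ e, φ e ≠ 0) ∧
  ∀ v : M.V, (∑ p : M.E × Bool, if M.endAt p.1 p.2 = some v then φ p.1 else 0) = 0

def FlowColourable : Prop := ∃ φ : M.E → Klein, M.ProperFlow φ

/-- A snark: a connected cubic graph without a proper 3-edge-colouring. -/
def IsSnark : Prop := M.IsCubic ∧ M.Closed ∧ M.Conn ∧ ¬ M.Colourable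

/-- The number of semiedges of `M`. -/
def semiendCount : ℕ :=
  (Finset.univ.filter fun p : M.E × Bool => M.endAt p.1 p.2 = none).card

/-- The number of semiedges of `M` whose edge is coloured `c`. -/
def semiendColourCount (φ : M.E → Klein) (c : Klein) : ℕ :=
  (Finset.univ.filter fun p : M.E × Bool => M.endAt p.1 p.2 = none ∧ φ p.1 = c).card

/-- The sum of the colours on the semiedges of `M`. -/
def semiSum (φ : M.E → Klein) : Klein :=
  ∑ p : M.E × Bool, if M.endAt p.1 p.2 = none then φ p.1 else 0

/-- Delete a set of vertices, retaining dangling edges; edges with no end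
outside `S` are discarded. -/
noncomputable def delVerts (S : Finset M.V) : Multipole := by
  classical
  exact
    { V := {x : M.V // x ∉ S}
      E := {e : M.E // ∃ (b : Bool) (x : M.V), M.endAt e b = some x ∧ x ∉ S}
      fst := fun e => match M.fst e.1 with
        | none => none
        | some x => if h : x ∈ S then none else some ⟨x, h⟩
      snd := fun e => match M.snd e.1 with
        | none => none
        | some x => if h : x ∈ S then none else some ⟨x, h⟩ }

/-- The flow through the connector of `M.delVerts S` consisting of the
semiedges formerly incident with the deleted vertex `u`. -/
noncomputable def connFlow (S : Finset M.V) (φ : (M.delVerts S).E → Klein) (u : M.V) : Klein :=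
  ∑ e : (M.delVerts S).E,
    ((if M.fst e.1 = some u then φ e else 0) + (if M.snd e.1 = some u then φ e else 0))

/-- Delete a single edge (keeping its end vertices). -/
def delEdge (e0 : M.E) : Multipole where
  V := M.V
  E := {e : M.E // e ≠ e0}
  fst := fun e => M.fst e.1
  snd := fun e => M.snd e.1

/-- Delete a pair of edges (keeping their end vertices). -/
def delPair (e1 e2 : M.E) : Multipole where
  V := M.V
  E := {e : M.E // e ≠ e1 ∧ e ≠ e2}
  fst := fun e => M.fst e.1
  snd := fun e => M.snd e.1

/-- Sever the edge `e0`: replace it by two dangling edges. -/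
def sever (e0 : M.E) : Multipole where
  V := M.V
  E := M.E ⊕ Unit
  fst := fun e => match e with
    | .inl f => M.fst f
    | .inr _ => M.snd e0
  snd := fun e => match e with
    | .inl f => if f = e0 then none else M.snd f
    | .inr _ => none

/-- The I-extension `G(e₁,e₂)`: subdivide `e₁` and `e₂` each with a new vertex
and join the two new vertices by a new edge. -/
def extend (e1 e2 : M.E) : Multipole where
  V := M.V ⊕ Fin 2
  E := M.E ⊕ Fin 3
  fst := fun e => match e with
    | .inl f => (M.fst f).map Sum.inl
    | .inr i => if i = 0 then some (Sum.inr 0)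
        else if i = 1 then some (Sum.inr 1) else some (Sum.inr 0)
  snd := fun e => match e with
    | .inl f => if f = e1 then some (Sum.inr 0)
        else if f = e2 then some (Sum.inr 1) else (M.snd f).map Sum.inl
    | .inr i => if i = 0 then (M.snd e1).map Sum.inl
        else if i = 1 then (M.snd e2).map Sum.inl else some (Sum.inr 1)

/-- A bicritical snark: a snark in which the removal of any two distinct
vertices leaves a 3-edge-colourable multipole. -/
def Bicritical : Prop :=
  M.IsSnark ∧ ∀ x y : M.V, x ≠ y → (M.delVerts {x, y}).Colourable

end Multipole

/-- The colouring set of a 6-pole, as a predicate on the colours of its six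
semiedges. -/
abbrev Pred6 : Type := Klein → Klein → Klein → Klein → Klein → Klein → Prop

/-- The colouring set of a 5-pole, as a predicate on the colours of its five
semiedges. -/
abbrev Pred5 : Type := Klein → Klein → Klein → Klein → Klein → Prop

/-- The defining property of colourings of a negator: see the paper. -/
def NegC (i1 i2 o1 o2 r : Klein) : Prop :=
  i1 ≠ 0 ∧ i2 ≠ 0 ∧ o1 ≠ 0 ∧ o2 ≠ 0 ∧ r ≠ 0 ∧
    ((i1 + i2 = 0 ∧ o1 + o2 ≠ 0 ∧ o1 + o2 = r) ∨
     (o1 + o2 = 0 ∧ i1 + i2 ≠ 0 ∧ i1 + i2 = r))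

/-- `N` is (the colouring set of) a negator `N(I,O,r)`. -/
def IsNegator (N : Pred5) : Prop :=
  ∀ i1 i2 o1 o2 r, N i1 i2 o1 o2 r → NegC i1 i2 o1 o2 r

/-- The defining property of colourings of a proper `(2,3)`-pole `T(B,C)`. -/
def P23C (b1 b2 c1 c2 c3 : Klein) : Prop :=
  b1 ≠ 0 ∧ b2 ≠ 0 ∧ c1 ≠ 0 ∧ c2 ≠ 0 ∧ c3 ≠ 0 ∧
    b1 + b2 = c1 + c2 + c3 ∧ b1 + b2 ≠ 0

/-- `T` is (the colouring set of) a proper `(2,3)`-pole. -/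
def IsProper23 (T : Pred5) : Prop :=
  ∀ b1 b2 c1 c2 c3, T b1 b2 c1 c2 c3 → P23C b1 b2 c1 c2 c3

section KleinFacts

lemma klein_self_add : ∀ x : Klein, x + x = 0 := by decide
lemma klein_add_ne_zero : ∀ {x y : Klein}, x ≠ y → x + y ≠ 0 := by decide
lemma klein_add_eq_zero : ∀ {x y : Klein}, x + y = 0 → x = y := by decide
lemma klein_three : ∀ {x y z : Klein}, x ≠ 0 → y ≠ 0 → z ≠ 0 →
    x ≠ y → x ≠ z → y ≠ z → x + y + z = 0 := by decide
lemma klein_ne_add_left : ∀ {x y : Klein}, y ≠ 0 → x + y ≠ x := by decide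
/-- one of the two nonzero colours different from `c` -/
def kOther (c : Klein) : Klein := if c = (1, 0) then (0, 1) else (1, 0)
lemma kOther_facts : ∀ c : Klein, c ≠ 0 → kOther c ≠ 0 ∧ c + kOther c ≠ 0 ∧
    kOther c ≠ c ∧ c + kOther c ≠ c ∧ kOther c ≠ c + kOther c := by decide

end KleinFacts

section Aux

open Multipole


variable {G : Multipole}

lemma sever_endAt_inl (e1 f : G.E) (hf : f ≠ e1) (b : Bool) :
    (G.sever e1).endAt (Sum.inl f : G.E ⊕ Unit) b = G.endAt f b := by
  cases b <;> simp [Multipole.sever, Multipole.endAt, hf]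

lemma sever_endAt_inl_e1_tt (e1 : G.E) :
    (G.sever e1).endAt (Sum.inl e1 : G.E ⊕ Unit) true = G.endAt e1 true := rfl

lemma sever_endAt_inl_e1_ff (e1 : G.E) :
    (G.sever e1).endAt (Sum.inl e1 : G.E ⊕ Unit) false = none := by
  simp [Multipole.sever, Multipole.endAt]

lemma sever_endAt_inr_tt (e1 : G.E) (x : Unit) :
    (G.sever e1).endAt (Sum.inr x : G.E ⊕ Unit) true = G.endAt e1 false := rfl

lemma sever_endAt_inr_ff (e1 : G.E) (x : Unit) :
    (G.sever e1).endAt (Sum.inr x : G.E ⊕ Unit) false = none := rfl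

lemma delVerts_endAt (M : Multipole) (S : Finset M.V) (e : (M.delVerts S).E) (b : Bool) :
    (M.delVerts S).endAt e b =
      (M.endAt e.1 b).bind (fun x => if h : x ∈ S then none else some ⟨x, h⟩) := by
  cases b <;> cases h : M.endAt e.1 _ <;>
    simp_all [Multipole.delVerts, Multipole.endAt]

lemma delVerts_endAt_some {M : Multipole} {S : Finset M.V} {e : (M.delVerts S).E} {b : Bool}
    {w : (M.delVerts S).V} :
    (M.delVerts S).endAt e b = some w ↔ M.endAt e.1 b = some w.1 := by
  rw [delVerts_endAt]
  cases h : M.endAt e.1 b with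
  | none => simp
  | some x =>
    simp only [Option.bind_some]
    constructor
    · intro hx
      split at hx
      · exact absurd hx (by simp)
      · cases hx; rfl
    · intro hx
      cases hx
      rw [dif_neg w.2]
      rfl

lemma delVerts_endAt_none_of_mem {M : Multipole} {S : Finset M.V} {e : (M.delVerts S).E}
    {b : Bool} {x : M.V} (h : M.endAt e.1 b = some x) (hx : x ∈ S) :
    (M.delVerts S).endAt e b = none := by
  rw [delVerts_endAt, h, Option.bind_some, dif_pos hx]

lemma delVerts_endAt_none_of_none {M : Multipole} {S : Finset M.V} {e : (M.delVerts S).E}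
    {b : Bool} (h : M.endAt e.1 b = none) : (M.delVerts S).endAt e b = none := by
  rw [delVerts_endAt, h]; rfl

/-- sum of an indicator function supported on two given points -/
lemma sum_filter_two {α β : Type*} [Fintype α] [DecidableEq α] [AddCommMonoid β]
    (P : α → Prop) [DecidablePred P] (f : α → β) (a b : α) (hab : a ≠ b)
    (ha : P a) (hb : P b) (hcomp : ∀ x, P x → x = a ∨ x = b) :
    (∑ x, if P x then f x else 0) = f a + f b := by
  rw [← Finset.sum_filter]
  have : Finset.univ.filter P = {a, b} := by
    ext x
    simp only [Finset.mem_filter, Finset.mem_univ, true_and, Finset.mem_insert,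
      Finset.mem_singleton]
    exact ⟨fun h => hcomp x h, fun h => by rcases h with rfl | rfl <;> assumption⟩
  rw [this, Finset.sum_pair hab]

/-- sum of an indicator function supported on three given points -/
lemma sum_filter_three {α β : Type*} [Fintype α] [DecidableEq α] [AddCommMonoid β]
    (P : α → Prop) [DecidablePred P] (f : α → β) (a b c : α) (hab : a ≠ b) (hac : a ≠ c)
    (hbc : b ≠ c) (ha : P a) (hb : P b) (hc : P c) (hcomp : ∀ x, P x → x = a ∨ x = b ∨ x = c) :
    (∑ x, if P x then f x else 0) = f a + f b + f c := by
  rw [← Finset.sum_filter]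
  have : Finset.univ.filter P = {a, b, c} := by
    ext x
    simp only [Finset.mem_filter, Finset.mem_univ, true_and, Finset.mem_insert,
      Finset.mem_singleton]
    exact ⟨fun h => hcomp x h, fun h => by rcases h with rfl | rfl | rfl <;> assumption⟩
  rw [this, Finset.sum_insert (by simp [hab, hac]), Finset.sum_pair hbc, add_assoc]

lemma pair_fst_eq {α β : Type*} {a : α} {b : β} {p : α × β} (h : (a, b) = p) : a = p.1 := by
  rw [← h]

lemma pair_snd_eq {α β : Type*} {a : α} {b : β} {p : α × β} (h : (a, b) = p) : b = p.2 := by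
  rw [← h]

section Lift

variable (G : Multipole) (u v : G.V) (e1 : G.E)

/-- the colour of the `R`-edge lying over an edge of `G`, or `0` if there is none -/
noncomputable def Phi0 (φ : ((G.sever e1).delVerts {u, v}).E → Klein)
    (m : (G.sever e1).E) : Klein :=
  if h : ∃ e : ((G.sever e1).delVerts {u, v}).E, e.1 = m then φ h.choose else 0

noncomputable def Phi (φ : ((G.sever e1).delVerts {u, v}).E → Klein) (f : G.E) : Klein :=
  Phi0 G u v e1 φ (Sum.inl f)

variable {G u v e1}

lemma Phi0_eq {φ : ((G.sever e1).delVerts {u, v}).E → Klein}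
    (e : ((G.sever e1).delVerts {u, v}).E) {m : (G.sever e1).E} (hm : e.1 = m) :
    Phi0 G u v e1 φ m = φ e := by
  have hex : ∃ e' : ((G.sever e1).delVerts {u, v}).E, e'.1 = m := ⟨e, hm⟩
  rw [Phi0, dif_pos hex]
  congr 1
  exact Subtype.ext (hex.choose_spec.trans hm.symm)

lemma Phi0_eq_zero {φ : ((G.sever e1).delVerts {u, v}).E → Klein} {m : (G.sever e1).E}
    (hm : ¬ ∃ e : ((G.sever e1).delVerts {u, v}).E, e.1 = m) :
    Phi0 G u v e1 φ m = 0 := dif_neg hm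

/-- the `(G.sever e1)`-edge over a `G`-edge-end -/
def LEdge (e1 : G.E) (p : G.E × Bool) : (G.sever e1).E :=
  if p.1 = e1 ∧ p.2 = false then Sum.inr () else Sum.inl p.1

def LBool (e1 : G.E) (p : G.E × Bool) : Bool :=
  if p.1 = e1 ∧ p.2 = false then true else p.2

lemma LE_endAt (p : G.E × Bool) :
    (G.sever e1).endAt (LEdge e1 p) (LBool e1 p) = G.endAt p.1 p.2 := by
  obtain ⟨f, b⟩ := p
  by_cases hc : f = e1 ∧ b = false
  · obtain ⟨rfl, rfl⟩ := hc
    simp [LEdge, LBool, sever_endAt_inr_tt]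
    rfl
  · erw [LEdge, LBool, if_neg hc, if_neg hc]
    by_cases hf : f = e1
    · have hb : b = true := by
        cases b
        · exact absurd ⟨hf, rfl⟩ hc
        · rfl
      subst hf hb
      rfl
    · exact sever_endAt_inl e1 f hf b

lemma LE_inj {p p' : G.E × Bool} (h1 : LEdge e1 p = LEdge e1 p')
    (h2 : LBool e1 p = LBool e1 p') : p = p' := by
  simp only [LEdge, LBool] at h1 h2
  by_cases hc : p.1 = e1 ∧ p.2 = false <;> by_cases hc' : p'.1 = e1 ∧ p'.2 = false
  · obtain ⟨h3, h4⟩ := hc; obtain ⟨h5, h6⟩ := hc'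
    exact Prod.ext (h3.trans h5.symm) (h4.trans h6.symm)
  · erw [if_pos hc, if_neg hc'] at h1; exact absurd h1 (by simp)
  · erw [if_neg hc, if_pos hc'] at h1; exact absurd h1 (by simp)
  · erw [if_neg hc, if_neg hc'] at h1
    rw [if_neg hc, if_neg hc'] at h2
    exact Prod.ext (by injection h1) h2

lemma LE_mem {p : G.E × Bool} {x : G.V} (hp : G.endAt p.1 p.2 = some x)
    (hx : x ∉ ({u, v} : Finset G.V)) :
    ∃ (b : Bool) (y : (G.sever e1).V), (G.sever e1).endAt (LEdge e1 p) b = some y ∧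
      y ∉ ({u, v} : Finset G.V) :=
  ⟨LBool e1 p, x, (LE_endAt p).trans hp, hx⟩

/-- the `R`-edge-end over a `G`-edge-end with a vertex outside `{u,v}` -/
def REnd (p : G.E × Bool) {x : G.V} (hp : G.endAt p.1 p.2 = some x)
    (hx : x ∉ ({u, v} : Finset G.V)) : ((G.sever e1).delVerts {u, v}).E × Bool :=
  (⟨LEdge e1 p, LE_mem hp hx⟩, LBool e1 p)

lemma REnd_endAt (p : G.E × Bool) {x : G.V} (hp : G.endAt p.1 p.2 = some x)
    (hx : x ∉ ({u, v} : Finset G.V)) :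
    ((G.sever e1).delVerts {u, v}).endAt (REnd (e1 := e1) p hp hx).1 (REnd (e1 := e1) p hp hx).2 =
      some (⟨x, hx⟩ : ((G.sever e1).delVerts {u, v}).V) := by
  apply delVerts_endAt_some.mpr
  exact (LE_endAt p).trans hp

lemma REnd_inj {p p' : G.E × Bool} {x x' : G.V} {hp : G.endAt p.1 p.2 = some x}
    {hx : x ∉ ({u, v} : Finset G.V)} {hp' : G.endAt p'.1 p'.2 = some x'}
    {hx' : x' ∉ ({u, v} : Finset G.V)}
    (h : REnd (e1 := e1) p hp hx = REnd (e1 := e1) p' hp' hx') : p = p' :=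
  LE_inj (congrArg (fun q => q.1.1) h) (congrArg Prod.snd h)

lemma REnd_surj (hclosed : G.Closed) (w : ((G.sever e1).delVerts {u, v}).V)
    (q : ((G.sever e1).delVerts {u, v}).E × Bool)
    (hq : ((G.sever e1).delVerts {u, v}).endAt q.1 q.2 = some w) :
    ∃ (p : G.E × Bool) (hp : G.endAt p.1 p.2 = some w.1), q = REnd (e1 := e1) p hp w.2 := by
  have hM : (G.sever e1).endAt q.1.1 q.2 = some w.1 := delVerts_endAt_some.mp hq
  rcases hE : q.1.1 with f | x
  · by_cases hf : f = e1
    · subst hf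
      have hb : q.2 = true := by
        cases hb : q.2
        · rw [hE, hb, sever_endAt_inl_e1_ff] at hM; exact absurd hM (by simp)
        · rfl
      refine ⟨(f, true), ?_, ?_⟩
      · rw [hE, hb] at hM; exact hM
      · have h1 : LEdge f (f, true) = Sum.inl f := by erw [LEdge, if_neg (by simp)]
        have h2 : LBool f (f, true) = true := by rw [LBool, if_neg (by simp)]
        refine Prod.ext (Subtype.ext ?_) ?_
        · exact hE.trans h1.symm
        · exact hb.trans h2.symm
    · have hend : G.endAt f q.2 = some w.1 := by
        rw [hE, sever_endAt_inl e1 f hf] at hM; exact hM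
      refine ⟨(f, q.2), hend, ?_⟩
      have h1 : LEdge e1 (f, q.2) = Sum.inl f := by erw [LEdge, if_neg (by simp [hf])]
      have h2 : LBool e1 (f, q.2) = q.2 := by rw [LBool, if_neg (by simp [hf])]
      refine Prod.ext (Subtype.ext ?_) ?_
      · exact hE.trans h1.symm
      · exact h2.symm
  · have hb : q.2 = true := by
      cases hb : q.2
      · rw [hE, hb, sever_endAt_inr_ff] at hM; exact absurd hM (by simp)
      · rfl
    refine ⟨(e1, false), ?_, ?_⟩
    · rw [hE, hb, sever_endAt_inr_tt] at hM; exact hM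
    · have h1 : LEdge e1 (e1, false) = Sum.inr () := by erw [LEdge, if_pos ⟨rfl, rfl⟩]
      have h2 : LBool e1 (e1, false) = true := by rw [LBool, if_pos ⟨rfl, rfl⟩]
      refine Prod.ext (Subtype.ext ?_) ?_
      · show q.1.1 = LEdge e1 (e1, false)
        cases x
        rw [h1]; exact hE
      · exact hb.trans h2.symm

lemma REnd_colour {φ : ((G.sever e1).delVerts {u, v}).E → Klein}
    (hEL : ∃ e : ((G.sever e1).delVerts {u, v}).E, e.1 = Sum.inl e1)
    (hio : ∀ (e e' : ((G.sever e1).delVerts {u, v}).E),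
      e.1 = Sum.inl e1 → e'.1 = Sum.inr () → φ e = φ e')
    (p : G.E × Bool) {x : G.V} (hp : G.endAt p.1 p.2 = some x)
    (hx : x ∉ ({u, v} : Finset G.V)) :
    φ (REnd (e1 := e1) p hp hx).1 = Phi G u v e1 φ p.1 := by
  by_cases hc : p.1 = e1 ∧ p.2 = false
  · have h1 : (REnd (e1 := e1) p hp hx).1.1 = Sum.inr () := by
      show LEdge e1 p = _
      erw [LEdge, if_pos hc]
    obtain ⟨eL, heL⟩ := hEL
    rw [Phi, hc.1, Phi0_eq eL heL]
    exact (hio eL (REnd (e1 := e1) p hp hx).1 heL h1).symm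
  · have h1 : (REnd (e1 := e1) p hp hx).1.1 = Sum.inl p.1 := by
      show LEdge e1 p = _
      erw [LEdge, if_neg hc]
    rw [Phi, Phi0_eq (REnd (e1 := e1) p hp hx).1 h1]
end Lift

set_option maxHeartbeats 1000000 in
lemma part1 (G : Multipole) (hcub : G.IsCubic) (hclosed : G.Closed) (hncol : ¬ G.Colourable)
    (u v : G.V) (huv : u ≠ v) (e0 : G.E) (he0 : G.Joins e0 u v) (e1 : G.E) (h01 : e1 ≠ e0)
    (hni : ∀ b : Bool, G.endAt e1 b ≠ some u ∧ G.endAt e1 b ≠ some v)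
    (φ : ((G.sever e1).delVerts {u, v}).E → Klein)
    (hφ : ((G.sever e1).delVerts {u, v}).Proper φ)
    (hA : (G.sever e1).connFlow {u, v} φ u ≠ 0)
    (hC : (∑ e : ((G.sever e1).delVerts {u, v}).E,
        @ite _ (e.1 = Sum.inl e1 ∨ e.1 = Sum.inr ())
          (@instDecidableOr _ _ ((G.sever e1).instED _ _) ((G.sever e1).instED _ _))
          (φ e) 0) = 0) : False := by
  classical
  -- orientation of e0
  obtain ⟨bu, hbu, hbv⟩ : ∃ b : Bool, G.endAt e0 b = some u ∧ G.endAt e0 (!b) = some v := by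
    rcases he0 with ⟨h1, h2⟩ | ⟨h1, h2⟩
    · exact ⟨true, h1, h2⟩
    · exact ⟨false, h2, h1⟩
  have hmemS : ∀ x : G.V, x ∈ ({u, v} : Finset G.V) ↔ x = u ∨ x = v := by
    intro x; simp [Finset.mem_insert]
  have hbool : ∀ b : Bool, b = bu ∨ b = !bu := by
    intro b; cases b <;> cases bu <;> simp
  have he0ends : ∀ b : Bool, G.endAt e0 b = some u ∨ G.endAt e0 b = some v := by
    intro b
    rcases hbool b with rfl | rfl
    · exact Or.inl hbu
    · exact Or.inr hbv
  have he0u : ∀ b : Bool, G.endAt e0 b = some u → b = bu := by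
    intro b hb
    rcases hbool b with rfl | rfl
    · rfl
    · rw [hbv] at hb; exact absurd (Option.some_injective _ hb) huv.symm
  have he0v : ∀ b : Bool, G.endAt e0 b = some v → b = !bu := by
    intro b hb
    rcases hbool b with rfl | rfl
    · rw [hbu] at hb; exact absurd (Option.some_injective _ hb) huv
    · rfl
  -- keptness
  have hkept_of : ∀ f : G.E, f ≠ e1 → ∀ (b : Bool) (x : G.V), G.endAt f b = some x →
      x ∉ ({u, v} : Finset G.V) → ∃ e : ((G.sever e1).delVerts {u, v}).E, e.1 = Sum.inl f := by
    intro f hf b x hx hxS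
    exact ⟨⟨Sum.inl f, ⟨b, x, by rw [sever_endAt_inl e1 f hf]; exact hx, hxS⟩⟩, rfl⟩
  have hsome : ∀ (f : G.E) (b : Bool), ∃ x : G.V, G.endAt f b = some x := by
    intro f b
    cases h : G.endAt f b
    · exact absurd h (hclosed f b)
    · exact ⟨_, rfl⟩
  obtain ⟨xt, hxt⟩ := hsome e1 true
  obtain ⟨xf, hxf⟩ := hsome e1 false
  have hxtS : xt ∉ ({u, v} : Finset G.V) := by
    rw [hmemS]
    rintro (rfl | rfl)
    · exact (hni true).1 hxt
    · exact (hni true).2 hxt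
  have hxfS : xf ∉ ({u, v} : Finset G.V) := by
    rw [hmemS]
    rintro (rfl | rfl)
    · exact (hni false).1 hxf
    · exact (hni false).2 hxf
  set EL : ((G.sever e1).delVerts {u, v}).E :=
    ⟨Sum.inl e1, ⟨true, xt, by rw [sever_endAt_inl_e1_tt]; exact hxt, hxtS⟩⟩ with hELdef
  set ER : ((G.sever e1).delVerts {u, v}).E :=
    ⟨Sum.inr (), ⟨true, xf, by rw [sever_endAt_inr_tt]; exact hxf, hxfS⟩⟩ with hERdef
  have hEL : EL.1 = Sum.inl e1 := rfl
  have hER : ER.1 = Sum.inr () := rfl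
  have hkeptE1 : ∃ e : ((G.sever e1).delVerts {u, v}).E, e.1 = Sum.inl e1 := ⟨EL, hEL⟩
  have hPhiK : ∀ f : G.E, (∃ e : ((G.sever e1).delVerts {u, v}).E, e.1 = Sum.inl f) →
      Phi G u v e1 φ f ≠ 0 := by
    rintro f ⟨e, he⟩
    rw [Phi, Phi0_eq e he]
    exact hφ.1 e
  have hPhiNK : ∀ f : G.E, ¬ (∃ e : ((G.sever e1).delVerts {u, v}).E, e.1 = Sum.inl f) →
      Phi G u v e1 φ f = 0 := fun f h => Phi0_eq_zero h
  have hunkept_ends : ∀ f : G.E, f ≠ e1 →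
      ¬ (∃ e : ((G.sever e1).delVerts {u, v}).E, e.1 = Sum.inl f) →
      ∀ b : Bool, G.endAt f b = some u ∨ G.endAt f b = some v := by
    intro f hf hk b
    obtain ⟨x, hx⟩ := hsome f b
    have hxS : x ∈ ({u, v} : Finset G.V) := by
      by_contra hxS
      exact hk (hkept_of f hf b x hx hxS)
    rcases (hmemS x).1 hxS with rfl | rfl
    · exact Or.inl hx
    · exact Or.inr hx
  have hke0 : ¬ (∃ e : ((G.sever e1).delVerts {u, v}).E, e.1 = Sum.inl e0) := by
    rintro ⟨e, he⟩
    obtain ⟨b, x, hx, hxS⟩ := e.2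
    rw [he, sever_endAt_inl e1 e0 (Ne.symm h01)] at hx
    rcases he0ends b with h | h <;> rw [hx] at h <;> apply hxS <;> erw [hmemS]
    · exact Or.inl (Option.some_injective _ h.symm).symm
    · exact Or.inr (Option.some_injective _ h.symm).symm
  -- the two halves of e1 get the same colour
  have hELER : EL ≠ ER := by
    intro h
    have : EL.1 = ER.1 := congrArg Subtype.val h
    rw [hEL, hER] at this
    exact absurd this (by simp)
  have hCsum : φ EL + φ ER = 0 := by
    rw [← hC]
    rw [@sum_filter_two _ _ _ _ _ (fun e : ((G.sever e1).delVerts {u, v}).E =>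
      e.1 = Sum.inl e1 ∨ e.1 = Sum.inr ())
      (fun e => @instDecidableOr _ _ ((G.sever e1).instED _ _) ((G.sever e1).instED _ _)) φ EL ER hELER (Or.inl hEL) (Or.inr hER) ?_]
    rintro e (h | h)
    · exact Or.inl (Subtype.ext (h.trans hEL.symm))
    · exact Or.inr (Subtype.ext (h.trans hER.symm))
  have hio : ∀ e e' : ((G.sever e1).delVerts {u, v}).E,
      e.1 = Sum.inl e1 → e'.1 = Sum.inr () → φ e = φ e' := by
    intro e e' h h'
    have h1 : e = EL := Subtype.ext (h.trans hEL.symm)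
    have h2 : e' = ER := Subtype.ext (h'.trans hER.symm)
    subst h1; subst h2
    exact klein_add_eq_zero hCsum
  -- the flow through a connector in terms of Phi
  have hflow : ∀ w : G.V, (∀ b : Bool, G.endAt e1 b ≠ some w) →
      (G.sever e1).connFlow {u, v} φ w
        = ∑ p : G.E × Bool, (if G.endAt p.1 p.2 = some w then Phi G u v e1 φ p.1 else 0) := by
    intro w hw
    have step1 : (G.sever e1).connFlow {u, v} φ w
        = ∑ e : ((G.sever e1).delVerts {u, v}).E,
            ((if (G.sever e1).fst e.1 = some w then Phi0 G u v e1 φ e.1 else 0)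
              + (if (G.sever e1).snd e.1 = some w then Phi0 G u v e1 φ e.1 else 0)) := by
      delta Multipole.connFlow
      refine Finset.sum_congr rfl (fun e _ => ?_)
      rw [Phi0_eq e rfl]
      exact congrArg₂ (· + ·) (if_congr Iff.rfl rfl rfl) (if_congr Iff.rfl rfl rfl)
    rw [step1]
    have step2 : ∑ e : ((G.sever e1).delVerts {u, v}).E,
        ((if (G.sever e1).fst e.1 = some w then Phi0 G u v e1 φ e.1 else 0)
          + (if (G.sever e1).snd e.1 = some w then Phi0 G u v e1 φ e.1 else 0))
        = ∑ m : (G.sever e1).E,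
            ((if (G.sever e1).fst m = some w then Phi0 G u v e1 φ m else 0)
              + (if (G.sever e1).snd m = some w then Phi0 G u v e1 φ m else 0)) := by
      refine Eq.trans ((Finset.sum_subtype (p := fun m : (G.sever e1).E =>
          ∃ (b : Bool) (x : (G.sever e1).V), (G.sever e1).endAt m b = some x ∧
            x ∉ ({u, v} : Finset G.V)) (F := ((G.sever e1).delVerts {u, v}).instEF)
        (Finset.univ.filter fun m : (G.sever e1).E =>
          ∃ (b : Bool) (x : (G.sever e1).V), (G.sever e1).endAt m b = some x ∧
            x ∉ ({u, v} : Finset G.V)) (by simp) (fun m =>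
              (if (G.sever e1).fst m = some w then Phi0 G u v e1 φ m else 0)
                + (if (G.sever e1).snd m = some w then Phi0 G u v e1 φ m else 0))).symm) ?_
      rw [Finset.sum_filter]
      refine Finset.sum_congr rfl (fun m _ => ?_)
      split
      · rfl
      · next hm =>
        have hz : Phi0 G u v e1 φ m = 0 := by
          apply Phi0_eq_zero
          rintro ⟨e, rfl⟩
          exact hm e.2
        rw [hz]
        simp
    rw [step2]
    show (∑ m : G.E ⊕ Unit,
        ((if (G.sever e1).fst m = some w then Phi0 G u v e1 φ m else 0)
          + (if (G.sever e1).snd m = some w then Phi0 G u v e1 φ m else 0)))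
      = ∑ p : G.E × Bool, (if G.endAt p.1 p.2 = some w then Phi G u v e1 φ p.1 else 0)
    rw [Fintype.sum_sum_type]
    have step3 : ∀ x : Unit,
        ((if (G.sever e1).fst (Sum.inr x) = some w then Phi0 G u v e1 φ (Sum.inr x) else 0)
          + (if (G.sever e1).snd (Sum.inr x) = some w then Phi0 G u v e1 φ (Sum.inr x) else 0))
          = 0 := by
      intro x
      rw [if_neg, if_neg]
      · simp
      · show ¬ (G.sever e1).snd (Sum.inr x) = some w
        simp [Multipole.sever]
      · show ¬ (G.sever e1).fst (Sum.inr x) = some w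
        exact hw false
    rw [Fintype.sum_prod_type]
    rw [Finset.sum_congr rfl (fun x (_ : x ∈ Finset.univ) => step3 x), Finset.sum_const_zero,
      add_zero]
    refine Finset.sum_congr rfl (fun f _ => ?_)
    rw [Fintype.sum_bool]
    by_cases hf : f = e1
    · subst hf
      have l2 : (G.sever f).snd (Sum.inl f) = none := by
        simpa [Multipole.endAt] using sever_endAt_inl_e1_ff (G := G) f
      have l1 : (G.sever f).fst (Sum.inl f) = G.endAt f true := rfl
      rw [l1, l2]
      simp [hw true, hw false]
      exact fun h => absurd h (hw true)
    · have h1 : (G.sever e1).fst (Sum.inl f) = G.endAt f true := rfl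
      have h2 : (G.sever e1).snd (Sum.inl f) = G.endAt f false := by
        have := sever_endAt_inl e1 f hf false
        rw [Multipole.endAt] at this
        exact this
      rw [h1, h2, Phi]
      exact congrArg₂ (· + ·) (if_congr Iff.rfl rfl rfl) (if_congr Iff.rfl rfl rfl)
  -- the three edge-ends at u
  have hE0u : (e0, bu) ∈ Finset.univ.filter
      (fun p : G.E × Bool => G.endAt p.1 p.2 = some u) :=
    Finset.mem_filter.mpr ⟨Finset.mem_univ _, hbu⟩
  have hcard2u : ((Finset.univ.filter
      (fun p : G.E × Bool => G.endAt p.1 p.2 = some u)).erase (e0, bu)).card = 2 := by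
    rw [Finset.card_erase_of_mem hE0u]
    have : (Finset.univ.filter (fun p : G.E × Bool => G.endAt p.1 p.2 = some u)).card = 3 :=
      hcub u
    rw [this]
  obtain ⟨P1, P2, hP12, hpairu⟩ := Finset.card_eq_two.mp hcard2u
  have hP1mem : P1 ∈ Finset.univ.filter (fun p : G.E × Bool => G.endAt p.1 p.2 = some u) :=
    Finset.mem_of_mem_erase (hpairu ▸ Finset.mem_insert_self _ _)
  have hP2mem : P2 ∈ Finset.univ.filter (fun p : G.E × Bool => G.endAt p.1 p.2 = some u) :=
    Finset.mem_of_mem_erase (hpairu ▸ (Finset.mem_insert_of_mem (Finset.mem_singleton_self _)))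
  have hP1ne : P1 ≠ (e0, bu) := Finset.ne_of_mem_erase (hpairu ▸ Finset.mem_insert_self _ _)
  have hP2ne : P2 ≠ (e0, bu) := Finset.ne_of_mem_erase
    (hpairu ▸ (Finset.mem_insert_of_mem (Finset.mem_singleton_self _)))
  have ha1 : G.endAt P1.1 P1.2 = some u := (Finset.mem_filter.mp hP1mem).2
  have ha2 : G.endAt P2.1 P2.2 = some u := (Finset.mem_filter.mp hP2mem).2
  have hcompu : ∀ q : G.E × Bool, G.endAt q.1 q.2 = some u →
      q = (e0, bu) ∨ q = P1 ∨ q = P2 := by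
    intro q hq
    by_cases h : q = (e0, bu)
    · exact Or.inl h
    · have : q ∈ (Finset.univ.filter
          (fun p : G.E × Bool => G.endAt p.1 p.2 = some u)).erase (e0, bu) :=
        Finset.mem_erase.mpr ⟨h, Finset.mem_filter.mpr ⟨Finset.mem_univ _, hq⟩⟩
      rw [hpairu] at this
      rcases Finset.mem_insert.mp this with h' | h'
      · exact Or.inr (Or.inl h')
      · exact Or.inr (Or.inr (Finset.mem_singleton.mp h'))
  have hP1e0 : P1.1 ≠ e0 := by
    intro h
    exact hP1ne (Prod.ext h (he0u P1.2 (h ▸ ha1)))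
  have hP2e0 : P2.1 ≠ e0 := by
    intro h
    exact hP2ne (Prod.ext h (he0u P2.2 (h ▸ ha2)))
  have hP1e1 : P1.1 ≠ e1 := fun h => (hni P1.2).1 (h ▸ ha1)
  have hP2e1 : P2.1 ≠ e1 := fun h => (hni P2.2).1 (h ▸ ha2)
  -- the three edge-ends at v
  have hE0v : (e0, !bu) ∈ Finset.univ.filter
      (fun p : G.E × Bool => G.endAt p.1 p.2 = some v) :=
    Finset.mem_filter.mpr ⟨Finset.mem_univ _, hbv⟩
  have hcard2v : ((Finset.univ.filter
      (fun p : G.E × Bool => G.endAt p.1 p.2 = some v)).erase (e0, !bu)).card = 2 := by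
    rw [Finset.card_erase_of_mem hE0v]
    have : (Finset.univ.filter (fun p : G.E × Bool => G.endAt p.1 p.2 = some v)).card = 3 :=
      hcub v
    rw [this]
  obtain ⟨Q1, Q2, hQ12, hpairv⟩ := Finset.card_eq_two.mp hcard2v
  have hQ1mem : Q1 ∈ Finset.univ.filter (fun p : G.E × Bool => G.endAt p.1 p.2 = some v) :=
    Finset.mem_of_mem_erase (hpairv ▸ Finset.mem_insert_self _ _)
  have hQ2mem : Q2 ∈ Finset.univ.filter (fun p : G.E × Bool => G.endAt p.1 p.2 = some v) :=
    Finset.mem_of_mem_erase (hpairv ▸ (Finset.mem_insert_of_mem (Finset.mem_singleton_self _)))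
  have hQ1ne : Q1 ≠ (e0, !bu) := Finset.ne_of_mem_erase (hpairv ▸ Finset.mem_insert_self _ _)
  have hQ2ne : Q2 ≠ (e0, !bu) := Finset.ne_of_mem_erase
    (hpairv ▸ (Finset.mem_insert_of_mem (Finset.mem_singleton_self _)))
  have hb1 : G.endAt Q1.1 Q1.2 = some v := (Finset.mem_filter.mp hQ1mem).2
  have hb2 : G.endAt Q2.1 Q2.2 = some v := (Finset.mem_filter.mp hQ2mem).2
  have hcompv : ∀ q : G.E × Bool, G.endAt q.1 q.2 = some v →
      q = (e0, !bu) ∨ q = Q1 ∨ q = Q2 := by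
    intro q hq
    by_cases h : q = (e0, !bu)
    · exact Or.inl h
    · have : q ∈ (Finset.univ.filter
          (fun p : G.E × Bool => G.endAt p.1 p.2 = some v)).erase (e0, !bu) :=
        Finset.mem_erase.mpr ⟨h, Finset.mem_filter.mpr ⟨Finset.mem_univ _, hq⟩⟩
      rw [hpairv] at this
      rcases Finset.mem_insert.mp this with h' | h'
      · exact Or.inr (Or.inl h')
      · exact Or.inr (Or.inr (Finset.mem_singleton.mp h'))
  have hQ1e0 : Q1.1 ≠ e0 := by
    intro h
    exact hQ1ne (Prod.ext h (he0v Q1.2 (h ▸ hb1)))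
  have hQ2e0 : Q2.1 ≠ e0 := by
    intro h
    exact hQ2ne (Prod.ext h (he0v Q2.2 (h ▸ hb2)))
  have hQ1e1 : Q1.1 ≠ e1 := fun h => (hni Q1.2).2 (h ▸ hb1)
  have hQ2e1 : Q2.1 ≠ e1 := fun h => (hni Q2.2).2 (h ▸ hb2)
  -- the flows through A and B
  have hAval : (G.sever e1).connFlow {u, v} φ u
      = Phi G u v e1 φ P1.1 + Phi G u v e1 φ P2.1 := by
    rw [hflow u (fun b => (hni b).1)]
    rw [sum_filter_three (fun p : G.E × Bool => G.endAt p.1 p.2 = some u)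
      (fun p => Phi G u v e1 φ p.1) (e0, bu) P1 P2 (Ne.symm hP1ne) (Ne.symm hP2ne) hP12
      hbu ha1 ha2 hcompu]
    rw [hPhiNK e0 hke0, zero_add]
  have hBval : (G.sever e1).connFlow {u, v} φ v
      = Phi G u v e1 φ Q1.1 + Phi G u v e1 φ Q2.1 := by
    rw [hflow v (fun b => (hni b).2)]
    rw [sum_filter_three (fun p : G.E × Bool => G.endAt p.1 p.2 = some v)
      (fun p => Phi G u v e1 φ p.1) (e0, !bu) Q1 Q2 (Ne.symm hQ1ne) (Ne.symm hQ2ne) hQ12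
      hbv hb1 hb2 hcompv]
    rw [hPhiNK e0 hke0, zero_add]
  -- every vertex of R has zero colour sum
  have hvsum : ∀ w : ((G.sever e1).delVerts {u, v}).V,
      (∑ q : ((G.sever e1).delVerts {u, v}).E × Bool,
        if ((G.sever e1).delVerts {u, v}).endAt q.1 q.2 = some w then φ q.1 else 0) = 0 := by
    intro w
    obtain ⟨c1, c2, c3, h12, h13, h23, hset⟩ := Finset.card_eq_three.mp
      (by have h := hcub w.1; unfold Multipole.degree at h; convert h; exact Iff.rfl : (Finset.univ.filter
        (fun p : G.E × Bool => G.endAt p.1 p.2 = some w.1)).card = 3)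
    have hc1 : G.endAt c1.1 c1.2 = some w.1 := by
      have : c1 ∈ Finset.univ.filter (fun p : G.E × Bool => G.endAt p.1 p.2 = some w.1) := by
        rw [hset]; simp
      exact (Finset.mem_filter.mp this).2
    have hc2 : G.endAt c2.1 c2.2 = some w.1 := by
      have : c2 ∈ Finset.univ.filter (fun p : G.E × Bool => G.endAt p.1 p.2 = some w.1) := by
        rw [hset]; simp
      exact (Finset.mem_filter.mp this).2
    have hc3 : G.endAt c3.1 c3.2 = some w.1 := by
      have : c3 ∈ Finset.univ.filter (fun p : G.E × Bool => G.endAt p.1 p.2 = some w.1) := by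
        rw [hset]; simp
      exact (Finset.mem_filter.mp this).2
    have hw2 := w.2
    rw [sum_filter_three
      (fun q : ((G.sever e1).delVerts {u, v}).E × Bool =>
        ((G.sever e1).delVerts {u, v}).endAt q.1 q.2 = some w)
      (fun q => φ q.1) (REnd (e1 := e1) c1 hc1 hw2) (REnd (e1 := e1) c2 hc2 hw2)
      (REnd (e1 := e1) c3 hc3 hw2)
      (fun h => h12 (REnd_inj h)) (fun h => h13 (REnd_inj h)) (fun h => h23 (REnd_inj h))
      (REnd_endAt c1 hc1 hw2) (REnd_endAt c2 hc2 hw2) (REnd_endAt c3 hc3 hw2) ?_]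
    · exact klein_three (hφ.1 _) (hφ.1 _) (hφ.1 _)
        (hφ.2 w _ _ (REnd_endAt c1 hc1 hw2) (REnd_endAt c2 hc2 hw2)
          (fun h => h12 (REnd_inj h)))
        (hφ.2 w _ _ (REnd_endAt c1 hc1 hw2) (REnd_endAt c3 hc3 hw2)
          (fun h => h13 (REnd_inj h)))
        (hφ.2 w _ _ (REnd_endAt c2 hc2 hw2) (REnd_endAt c3 hc3 hw2)
          (fun h => h23 (REnd_inj h)))
    · intro q hq
      obtain ⟨p, hp, rfl⟩ := REnd_surj hclosed w q hq
      have hpmem : p ∈ Finset.univ.filter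
          (fun p : G.E × Bool => G.endAt p.1 p.2 = some w.1) :=
        Finset.mem_filter.mpr ⟨Finset.mem_univ _, hp⟩
      rw [hset] at hpmem
      rcases Finset.mem_insert.mp hpmem with rfl | hpmem'
      · exact Or.inl rfl
      · rcases Finset.mem_insert.mp hpmem' with rfl | hpmem''
        · exact Or.inr (Or.inl rfl)
        · rcases Finset.mem_singleton.mp hpmem'' with rfl
          exact Or.inr (Or.inr rfl)
  -- parity: flow through A + flow through B + flow through C = 0
  have hparity : (G.sever e1).connFlow {u, v} φ u + (G.sever e1).connFlow {u, v} φ v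
      + (φ EL + φ ER) = 0 := by
    have hdecomp : ∀ q : ((G.sever e1).delVerts {u, v}).E × Bool,
        φ q.1 = ((if (G.sever e1).endAt q.1.1 q.2 = some u then φ q.1 else 0)
          + (if (G.sever e1).endAt q.1.1 q.2 = some v then φ q.1 else 0)
          + (if (G.sever e1).endAt q.1.1 q.2 = none then φ q.1 else 0))
          + ∑ w : ((G.sever e1).delVerts {u, v}).V,
              (if ((G.sever e1).delVerts {u, v}).endAt q.1 q.2 = some w then φ q.1 else 0) := by
      intro q
      rcases h : (G.sever e1).endAt q.1.1 q.2 with _ | x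
      · have hr := delVerts_endAt_none_of_none (M := G.sever e1)
          (S := ({u, v} : Finset (G.sever e1).V)) (e := q.1) (b := q.2) h
        rw [Finset.sum_eq_zero (fun w (_ : w ∈ Finset.univ) => if_neg (by rw [hr]; simp))]
        rw [if_neg (by simp), if_neg (by simp), if_pos rfl]
        simp
      · by_cases hx : x ∈ ({u, v} : Finset G.V)
        · have hr := delVerts_endAt_none_of_mem (M := G.sever e1)
            (S := ({u, v} : Finset (G.sever e1).V)) h hx
          rw [Finset.sum_eq_zero (fun w (_ : w ∈ Finset.univ) => if_neg (by rw [hr]; simp))]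
          rcases (hmemS x).1 hx with h1 | h1
          · rw [if_pos (by rw [h1]; rfl), if_neg (by
                intro hh
                exact huv (h1 ▸ (Option.some_injective _ hh))), if_neg (by simp)]
            simp
          · rw [if_neg (by
                intro hh
                exact huv ((Option.some_injective _ hh).symm.trans h1)), if_pos (by rw [h1]; rfl),
              if_neg (by simp)]
            simp
        · have hr : ((G.sever e1).delVerts {u, v}).endAt q.1 q.2 =
              some (⟨x, hx⟩ : ((G.sever e1).delVerts {u, v}).V) :=
            delVerts_endAt_some.mpr h
          have hvs : (∑ w : ((G.sever e1).delVerts {u, v}).V,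
              (if ((G.sever e1).delVerts {u, v}).endAt q.1 q.2 = some w then φ q.1 else 0))
              = φ q.1 := by
            simp only [hr, Option.some.injEq]
            refine (Finset.sum_eq_single (⟨x, hx⟩ : ((G.sever e1).delVerts {u, v}).V)
              ?_ ?_).trans (if_pos rfl)
            · intro b _ hb; exact if_neg (fun h => hb (Option.some_injective _ h).symm)
            · intro h; exact absurd (Finset.mem_univ _) h
          rw [hvs]
          erw [if_neg (fun hh => hx ((hmemS x).2 (Or.inl (Option.some_injective _ hh))))]
          erw [if_neg (fun hh => hx ((hmemS x).2 (Or.inr (Option.some_injective _ hh))))]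
          erw [if_neg (by simp)]
          simp
    have hLHS : (∑ q : ((G.sever e1).delVerts {u, v}).E × Bool, φ q.1) = 0 := by
      rw [Fintype.sum_prod_type]
      have hz : ∀ e : ((G.sever e1).delVerts {u, v}).E, (∑ b : Bool, φ (e, b).1) = 0 :=
        fun e => by rw [Fintype.sum_bool]; exact klein_self_add (φ e)
      rw [Finset.sum_congr rfl (fun e (_ : e ∈ Finset.univ) => hz e)]
      exact Finset.sum_const_zero
    rw [Finset.sum_congr rfl (fun q (_ : q ∈ Finset.univ) => hdecomp q)] at hLHS
    rw [Finset.sum_add_distrib, Finset.sum_add_distrib, Finset.sum_add_distrib] at hLHS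
    have hSu : (∑ q : ((G.sever e1).delVerts {u, v}).E × Bool,
        if (G.sever e1).endAt q.1.1 q.2 = some u then φ q.1 else 0)
        = (G.sever e1).connFlow {u, v} φ u := by
      delta Multipole.connFlow; rw [Fintype.sum_prod_type]
      exact Finset.sum_congr rfl (fun e _ => by
          rw [Fintype.sum_bool]
          exact congrArg₂ (· + ·) (if_congr Iff.rfl rfl rfl) (if_congr Iff.rfl rfl rfl))
    have hSv : (∑ q : ((G.sever e1).delVerts {u, v}).E × Bool,
        if (G.sever e1).endAt q.1.1 q.2 = some v then φ q.1 else 0)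
        = (G.sever e1).connFlow {u, v} φ v := by
      delta Multipole.connFlow; rw [Fintype.sum_prod_type]
      exact Finset.sum_congr rfl (fun e _ => by
          rw [Fintype.sum_bool]
          exact congrArg₂ (· + ·) (if_congr Iff.rfl rfl rfl) (if_congr Iff.rfl rfl rfl))
    have hSn : (∑ q : ((G.sever e1).delVerts {u, v}).E × Bool,
        if (G.sever e1).endAt q.1.1 q.2 = none then φ q.1 else 0)
        = φ EL + φ ER := by
      rw [sum_filter_two (fun q : ((G.sever e1).delVerts {u, v}).E × Bool =>
        (G.sever e1).endAt q.1.1 q.2 = none) (fun q => φ q.1) (EL, false) (ER, false)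
        (fun h => hELER (congrArg Prod.fst h))
        (by show (G.sever e1).endAt EL.1 false = none
            rw [hEL]
            exact sever_endAt_inl_e1_ff e1)
        (by show (G.sever e1).endAt ER.1 false = none
            rw [hER]
            exact sever_endAt_inr_ff e1 ())
        ?_]
      intro q hq
      rcases hE : q.1.1 with f | x
      · by_cases hf : f = e1
        · subst hf
          cases hbq : q.2
          · exact Or.inl (Prod.ext (Subtype.ext (hE.trans hEL.symm)) hbq)
          · rw [hE, hbq] at hq
            exact absurd hq (hclosed f true)
        · rw [hE, sever_endAt_inl e1 f hf] at hq
          exact absurd hq (hclosed f q.2)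
      · cases x
        cases hbq : q.2
        · exact Or.inr (Prod.ext (Subtype.ext (hE.trans hER.symm)) hbq)
        · rw [hE, hbq, sever_endAt_inr_tt] at hq
          exact absurd hq (hclosed e1 false)
    have hSD : (∑ q : ((G.sever e1).delVerts {u, v}).E × Bool,
        ∑ w : ((G.sever e1).delVerts {u, v}).V,
          (if ((G.sever e1).delVerts {u, v}).endAt q.1 q.2 = some w then φ q.1 else 0)) = 0 := by
      rw [Finset.sum_comm]
      exact Finset.sum_eq_zero (fun w _ => hvsum w)
    rw [hSu, hSv, hSn, hSD, add_zero] at hLHS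
    exact hLHS
  have hBA : (G.sever e1).connFlow {u, v} φ v = (G.sever e1).connFlow {u, v} φ u := by
    rw [hCsum, add_zero] at hparity
    exact (klein_add_eq_zero hparity).symm
  have hB : (G.sever e1).connFlow {u, v} φ v ≠ 0 := by rw [hBA]; exact hA
  have hP12e : P1.1 ≠ P2.1 := by
    intro h
    exact hA (by rw [hAval, h]; exact klein_self_add _)
  have hQ12e : Q1.1 ≠ Q2.1 := by
    intro h
    exact hB (by rw [hBval, h]; exact klein_self_add _)
  -- generic colouring builder
  have build : ∀ (Pa Pb Qa Qb : G.E × Bool),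
      (∀ q : G.E × Bool, G.endAt q.1 q.2 = some u → q = (e0, bu) ∨ q = Pa ∨ q = Pb) →
      (∀ q : G.E × Bool, G.endAt q.1 q.2 = some v → q = (e0, !bu) ∨ q = Qa ∨ q = Qb) →
      ∀ ψ : G.E → Klein, (∀ f, ψ f ≠ 0) →
      (∀ f : G.E, (∃ e : ((G.sever e1).delVerts {u, v}).E, e.1 = Sum.inl f) →
        ψ f = Phi G u v e1 φ f) →
      ψ e0 ≠ ψ Pa.1 → ψ e0 ≠ ψ Pb.1 → ψ Pa.1 ≠ ψ Pb.1 →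
      ψ e0 ≠ ψ Qa.1 → ψ e0 ≠ ψ Qb.1 → ψ Qa.1 ≠ ψ Qb.1 → False := by
    intro Pa Pb Qa Qb hcu hcv ψ hψ0 hψΦ h1 h2 h3 h4 h5 h6
    apply hncol
    refine ⟨ψ, hψ0, ?_⟩
    intro w p q hp hq hpq
    by_cases hwu : w = u
    · subst hwu
      rcases hcu p hp with rfl | rfl | rfl <;> rcases hcu q hq with rfl | rfl | rfl <;>
        first
          | exact absurd rfl hpq
          | exact h1 | exact h1.symm | exact h2 | exact h2.symm | exact h3 | exact h3.symm
    · by_cases hwv : w = v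
      · subst hwv
        rcases hcv p hp with rfl | rfl | rfl <;> rcases hcv q hq with rfl | rfl | rfl <;>
          first
            | exact absurd rfl hpq
            | exact h4 | exact h4.symm | exact h5 | exact h5.symm | exact h6 | exact h6.symm
      · have hw : w ∉ ({u, v} : Finset G.V) := by
          intro hmem
          rcases (hmemS w).1 hmem with h | h
          · exact hwu h
          · exact hwv h
        have kp : ∃ e : ((G.sever e1).delVerts {u, v}).E, e.1 = Sum.inl p.1 := by
          by_cases hpe : p.1 = e1
          · rw [hpe]; exact hkeptE1
          · exact hkept_of p.1 hpe p.2 w hp hw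
        have kq : ∃ e : ((G.sever e1).delVerts {u, v}).E, e.1 = Sum.inl q.1 := by
          by_cases hqe : q.1 = e1
          · rw [hqe]; exact hkeptE1
          · exact hkept_of q.1 hqe q.2 w hq hw
        rw [hψΦ p.1 kp, hψΦ q.1 kq]
        rw [← REnd_colour hkeptE1 hio p hp hw, ← REnd_colour hkeptE1 hio q hq hw]
        exact hφ.2 ⟨w, hw⟩ _ _ (REnd_endAt p hp hw) (REnd_endAt q hq hw)
          (fun h => hpq (REnd_inj h))
  -- the mixed (parallel-edge) case
  have hmix : ∀ Pa Pb : G.E × Bool,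
      ((Pa = P1 ∧ Pb = P2) ∨ (Pa = P2 ∧ Pb = P1)) →
      ¬(∃ e : ((G.sever e1).delVerts {u, v}).E, e.1 = Sum.inl Pa.1) →
      (∃ e : ((G.sever e1).delVerts {u, v}).E, e.1 = Sum.inl Pb.1) → False := by
    intro Pa Pb hor hka hkb
    have hPau : G.endAt Pa.1 Pa.2 = some u := by
      rcases hor with ⟨rfl, rfl⟩ | ⟨rfl, rfl⟩ <;> assumption
    have hPae0 : Pa.1 ≠ e0 := by
      rcases hor with ⟨rfl, rfl⟩ | ⟨rfl, rfl⟩ <;> assumption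
    have hPbe0 : Pb.1 ≠ e0 := by
      rcases hor with ⟨rfl, rfl⟩ | ⟨rfl, rfl⟩ <;> assumption
    have hPae1 : Pa.1 ≠ e1 := by
      rcases hor with ⟨rfl, rfl⟩ | ⟨rfl, rfl⟩ <;> assumption
    have hPab : Pa.1 ≠ Pb.1 := by
      rcases hor with ⟨rfl, rfl⟩ | ⟨rfl, rfl⟩
      · exact hP12e
      · exact hP12e.symm
    have hcompu' : ∀ q : G.E × Bool, G.endAt q.1 q.2 = some u →
        q = (e0, bu) ∨ q = Pa ∨ q = Pb := by
      intro q hq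
      rcases hor with ⟨rfl, rfl⟩ | ⟨rfl, rfl⟩
      · exact hcompu q hq
      · rcases hcompu q hq with h | h | h
        · exact Or.inl h
        · exact Or.inr (Or.inr h)
        · exact Or.inr (Or.inl h)
    have hAval' : (G.sever e1).connFlow {u, v} φ u
        = Phi G u v e1 φ Pa.1 + Phi G u v e1 φ Pb.1 := by
      rcases hor with ⟨rfl, rfl⟩ | ⟨rfl, rfl⟩
      · exact hAval
      · rw [hAval]; exact add_comm _ _
    have hPhiPa : Phi G u v e1 φ Pa.1 = 0 := hPhiNK _ hka
    have hcAPb : (G.sever e1).connFlow {u, v} φ u = Phi G u v e1 φ Pb.1 := by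
      rw [hAval', hPhiPa, zero_add]
    have hother : G.endAt Pa.1 (!Pa.2) = some v := by
      rcases hunkept_ends Pa.1 hPae1 hka (!Pa.2) with h | h
      · exfalso
        rcases hcompu' (Pa.1, !Pa.2) h with hq | hq | hq
        · exact hPae0 (pair_fst_eq hq)
        · have hb := pair_snd_eq hq
          simp at hb
        · exact hPab (pair_fst_eq hq)
      · exact h
    obtain ⟨Qa, Qb, horQ, hQaPa⟩ : ∃ Qa Qb : G.E × Bool,
        ((Qa = Q1 ∧ Qb = Q2) ∨ (Qa = Q2 ∧ Qb = Q1)) ∧ Qa.1 = Pa.1 := by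
      rcases hcompv (Pa.1, !Pa.2) hother with h | h | h
      · exact absurd (congrArg Prod.fst h) hPae0
      · exact ⟨Q1, Q2, Or.inl ⟨rfl, rfl⟩, (congrArg Prod.fst h).symm⟩
      · exact ⟨Q2, Q1, Or.inr ⟨rfl, rfl⟩, (congrArg Prod.fst h).symm⟩
    have hQbe0 : Qb.1 ≠ e0 := by
      rcases horQ with ⟨rfl, rfl⟩ | ⟨rfl, rfl⟩ <;> assumption
    have hQbe1 : Qb.1 ≠ e1 := by
      rcases horQ with ⟨rfl, rfl⟩ | ⟨rfl, rfl⟩ <;> assumption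
    have hQab : Qa.1 ≠ Qb.1 := by
      rcases horQ with ⟨rfl, rfl⟩ | ⟨rfl, rfl⟩
      · exact hQ12e
      · exact hQ12e.symm
    have hcompv' : ∀ q : G.E × Bool, G.endAt q.1 q.2 = some v →
        q = (e0, !bu) ∨ q = Qa ∨ q = Qb := by
      intro q hq
      rcases horQ with ⟨rfl, rfl⟩ | ⟨rfl, rfl⟩
      · exact hcompv q hq
      · rcases hcompv q hq with h | h | h
        · exact Or.inl h
        · exact Or.inr (Or.inr h)
        · exact Or.inr (Or.inl h)
    have hBval' : (G.sever e1).connFlow {u, v} φ v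
        = Phi G u v e1 φ Qa.1 + Phi G u v e1 φ Qb.1 := by
      rcases horQ with ⟨rfl, rfl⟩ | ⟨rfl, rfl⟩
      · exact hBval
      · rw [hBval]; exact add_comm _ _
    have hPhiQa : Phi G u v e1 φ Qa.1 = 0 := by rw [hQaPa]; exact hPhiPa
    have hkQb : ∃ e : ((G.sever e1).delVerts {u, v}).E, e.1 = Sum.inl Qb.1 := by
      by_contra hk
      exact hB (by rw [hBval', hPhiQa, hPhiNK _ hk, add_zero])
    have hcBQb : (G.sever e1).connFlow {u, v} φ v = Phi G u v e1 φ Qb.1 := by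
      rw [hBval', hPhiQa, zero_add]
    have hQbPa : Qb.1 ≠ Pa.1 := fun h => hQab (hQaPa.trans h.symm)
    obtain ⟨hk1, hk2, hk3, hk4, hk5⟩ := kOther_facts _ hA
    set ψ : G.E → Klein := fun f =>
      if f = e0 then kOther ((G.sever e1).connFlow {u, v} φ u)
      else if f = Pa.1 then
        (G.sever e1).connFlow {u, v} φ u + kOther ((G.sever e1).connFlow {u, v} φ u)
      else Phi G u v e1 φ f with hψdef
    have vA : ψ e0 = kOther ((G.sever e1).connFlow {u, v} φ u) := if_pos rfl
    have vPa : ψ Pa.1 = (G.sever e1).connFlow {u, v} φ u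
        + kOther ((G.sever e1).connFlow {u, v} φ u) :=
      (if_neg hPae0).trans (if_pos rfl)
    have vPb : ψ Pb.1 = (G.sever e1).connFlow {u, v} φ u :=
      ((if_neg hPbe0).trans (if_neg hPab.symm)).trans hcAPb.symm
    have vQa : ψ Qa.1 = (G.sever e1).connFlow {u, v} φ u
        + kOther ((G.sever e1).connFlow {u, v} φ u) := by rw [hQaPa]; exact vPa
    have vQb : ψ Qb.1 = (G.sever e1).connFlow {u, v} φ u :=
      ((if_neg hQbe0).trans (if_neg hQbPa)).trans (hcBQb.symm.trans hBA)
    refine build Pa Pb Qa Qb hcompu' hcompv' ψ ?_ ?_ ?_ ?_ ?_ ?_ ?_ ?_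
    · intro f
      by_cases hf0 : f = e0
      · rw [hf0, vA]; exact hk1
      · by_cases hfPa : f = Pa.1
        · rw [hfPa, vPa]; exact hk2
        · have hval : ψ f = Phi G u v e1 φ f := (if_neg hf0).trans (if_neg hfPa)
          rw [hval]
          apply hPhiK
          by_cases hfe1 : f = e1
          · rw [hfe1]; exact hkeptE1
          · by_contra hk
            rcases hunkept_ends f hfe1 hk true with h | h
            · rcases hcompu' (f, true) h with hq | hq | hq
              · exact hf0 (pair_fst_eq hq)
              · exact hfPa (pair_fst_eq hq)
              · exact hk (by rw [(pair_fst_eq hq)]; exact hkb)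
            · rcases hcompv' (f, true) h with hq | hq | hq
              · exact hf0 (pair_fst_eq hq)
              · exact hfPa ((pair_fst_eq hq).trans hQaPa)
              · exact hk (by rw [(pair_fst_eq hq)]; exact hkQb)
    · intro f hkf
      have hf0 : f ≠ e0 := fun h => hke0 (h ▸ hkf)
      have hfPa : f ≠ Pa.1 := fun h => hka (h ▸ hkf)
      exact (if_neg hf0).trans (if_neg hfPa)
    · rw [vA, vPa]; exact hk5
    · rw [vA, vPb]; exact hk3
    · rw [vPa, vPb]; exact hk4
    · rw [vA, vQa]; exact hk5
    · rw [vA, vQb]; exact hk3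
    · rw [vQa, vQb]; exact hk4
  -- final case analysis
  by_cases k1 : ∃ e : ((G.sever e1).delVerts {u, v}).E, e.1 = Sum.inl P1.1
  · by_cases k2 : ∃ e : ((G.sever e1).delVerts {u, v}).E, e.1 = Sum.inl P2.1
    · -- both edges at u are retained in R
      have hA1 : Phi G u v e1 φ P1.1 ≠ 0 := hPhiK _ k1
      have hA2 : Phi G u v e1 φ P2.1 ≠ 0 := hPhiK _ k2
      have l1 : ∃ e : ((G.sever e1).delVerts {u, v}).E, e.1 = Sum.inl Q1.1 := by
        by_contra hk
        rcases hunkept_ends Q1.1 hQ1e1 hk (!Q1.2) with h | h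
        · rcases hcompu (Q1.1, !Q1.2) h with hq | hq | hq
          · exact hQ1e0 (pair_fst_eq hq)
          · exact hk (by rw [(pair_fst_eq hq)]; exact k1)
          · exact hk (by rw [(pair_fst_eq hq)]; exact k2)
        · rcases hcompv (Q1.1, !Q1.2) h with hq | hq | hq
          · exact hQ1e0 (pair_fst_eq hq)
          · have hb' := pair_snd_eq hq
            simp at hb'
          · exact hQ12e (pair_fst_eq hq)
      have l2 : ∃ e : ((G.sever e1).delVerts {u, v}).E, e.1 = Sum.inl Q2.1 := by
        by_contra hk
        rcases hunkept_ends Q2.1 hQ2e1 hk (!Q2.2) with h | h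
        · rcases hcompu (Q2.1, !Q2.2) h with hq | hq | hq
          · exact hQ2e0 (pair_fst_eq hq)
          · exact hk (by rw [(pair_fst_eq hq)]; exact k1)
          · exact hk (by rw [(pair_fst_eq hq)]; exact k2)
        · rcases hcompv (Q2.1, !Q2.2) h with hq | hq | hq
          · exact hQ2e0 (pair_fst_eq hq)
          · exact hQ12e.symm (pair_fst_eq hq)
          · have hb' := pair_snd_eq hq
            simp at hb'
      have hB1 : Phi G u v e1 φ Q1.1 ≠ 0 := hPhiK _ l1
      have hB2 : Phi G u v e1 φ Q2.1 ≠ 0 := hPhiK _ l2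
      set ψ : G.E → Klein := fun f =>
        if f = e0 then (G.sever e1).connFlow {u, v} φ u else Phi G u v e1 φ f with hψdef
      have vA : ψ e0 = (G.sever e1).connFlow {u, v} φ u := if_pos rfl
      have vP1 : ψ P1.1 = Phi G u v e1 φ P1.1 := if_neg hP1e0
      have vP2 : ψ P2.1 = Phi G u v e1 φ P2.1 := if_neg hP2e0
      have vQ1 : ψ Q1.1 = Phi G u v e1 φ Q1.1 := if_neg hQ1e0
      have vQ2 : ψ Q2.1 = Phi G u v e1 φ Q2.1 := if_neg hQ2e0
      refine build P1 P2 Q1 Q2 hcompu hcompv ψ ?_ ?_ ?_ ?_ ?_ ?_ ?_ ?_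
      · intro f
        by_cases hf0 : f = e0
        · rw [hf0, vA]; exact hA
        · have hval : ψ f = Phi G u v e1 φ f := if_neg hf0
          rw [hval]
          apply hPhiK
          by_cases hfe1 : f = e1
          · rw [hfe1]; exact hkeptE1
          · by_contra hk
            rcases hunkept_ends f hfe1 hk true with h | h
            · rcases hcompu (f, true) h with hq | hq | hq
              · exact hf0 (pair_fst_eq hq)
              · exact hk (by rw [(pair_fst_eq hq)]; exact k1)
              · exact hk (by rw [(pair_fst_eq hq)]; exact k2)
            · rcases hcompv (f, true) h with hq | hq | hq
              · exact hf0 (pair_fst_eq hq)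
              · exact hk (by rw [(pair_fst_eq hq)]; exact l1)
              · exact hk (by rw [(pair_fst_eq hq)]; exact l2)
      · intro f hkf
        exact if_neg (fun h : f = e0 => hke0 (h ▸ hkf))
      · rw [vA, vP1, hAval]
        exact klein_ne_add_left hA2
      · rw [vA, vP2, hAval, add_comm]
        exact klein_ne_add_left hA1
      · rw [vP1, vP2]
        intro h
        exact hA (by rw [hAval, h]; exact klein_self_add _)
      · rw [vA, vQ1, ← hBA, hBval]
        exact klein_ne_add_left hB2
      · rw [vA, vQ2, ← hBA, hBval, add_comm]
        exact klein_ne_add_left hB1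
      · rw [vQ1, vQ2]
        intro h
        exact hB (by rw [hBval, h]; exact klein_self_add _)
    · exact hmix P2 P1 (Or.inr ⟨rfl, rfl⟩) k2 k1
  · by_cases k2 : ∃ e : ((G.sever e1).delVerts {u, v}).E, e.1 = Sum.inl P2.1
    · exact hmix P1 P2 (Or.inl ⟨rfl, rfl⟩) k1 k2
    · exact hA (by rw [hAval, hPhiNK _ k1, hPhiNK _ k2, add_zero])



/-- **Class 34-C.**  Let `R(A,B,C)` be the `(2,2,2)`-pole obtained from a snark
`G` by deleting the two endvertices `u, v` of an edge `e₀` (connectors `A`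
at `u` and `B` at `v`) and severing an edge `e₁` not incident with `u` or `v`
(connector `C`, the two halves of `e₁`).  Then:
(1) `R` admits no proper 3-edge-colouring `φ` with `φ*(A) ≠ 0` and
`φ*(C) = 0`; and
(2) consequently, for any abstract `(2,2,2)`-pole `R₆(A,B,C)` whose colouring
set has this property, any negator `N(I,O,r)` and proper `(2,3)`-poles
`T₁(B₁,C₁)`, `T₂(B₂,C₂)`, the 9-pole `M₃` formed by joining `B₁` to `A`, `C`
to `I` and `O` to `B₂` is uncolourable. -/
theorem class_34C (G : Multipole) (hG : G.IsSnark) (u v : G.V) (huv : u ≠ v)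
    (e0 : G.E) (he0 : G.Joins e0 u v) (e1 : G.E) (h01 : e1 ≠ e0)
    (hni : ∀ b : Bool, G.endAt e1 b ≠ some u ∧ G.endAt e1 b ≠ some v) :
    (∀ φ : ((G.sever e1).delVerts {u, v}).E → Klein,
       ((G.sever e1).delVerts {u, v}).Proper φ →
       ¬ ((G.sever e1).connFlow {u, v} φ u ≠ 0 ∧
          (∑ e : ((G.sever e1).delVerts {u, v}).E,
              @ite _ (e.1 = Sum.inl e1 ∨ e.1 = Sum.inr ())
                (@instDecidableOr _ _ ((G.sever e1).instED _ _) ((G.sever e1).instED _ _))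
                (φ e) 0) = 0)) ∧
    (∀ R6 : Pred6,
       (∀ a1 a2 b1 b2 c1 c2, R6 a1 a2 b1 b2 c1 c2 → ¬ (a1 + a2 ≠ 0 ∧ c1 + c2 = 0)) →
       ∀ N T1 T2 : Pred5, IsNegator N → IsProper23 T1 → IsProper23 T2 →
       ¬ ∃ a1 a2 b1 b2 c1 c2 c11 c12 c13 o1 o2 r c21 c22 c23 : Klein,
           T1 a1 a2 c11 c12 c13 ∧ R6 a1 a2 b1 b2 c1 c2 ∧
           N c1 c2 o1 o2 r ∧ T2 o1 o2 c21 c22 c23) := by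
  constructor
  · intro φ hφ h
    obtain ⟨hcub, hclosed, hconn, hncol⟩ := hG
    exact part1 G hcub hclosed hncol u v huv e0 he0 e1 h01 hni φ hφ h.1 h.2
  · rintro R6 hR6 N T1 T2 hN hT1 hT2
      ⟨a1, a2, b1, b2, c1, c2, c11, c12, c13, o1, o2, r, c21, c22, c23, h1, hR, hn, h2⟩
    obtain ⟨-, -, -, -, -, -, ha⟩ := hT1 _ _ _ _ _ h1
    have hc : c1 + c2 ≠ 0 := fun hc => hR6 _ _ _ _ _ _ hR ⟨ha, hc⟩
    obtain ⟨-, -, -, -, -, hneg⟩ := hN _ _ _ _ _ hn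
    obtain ⟨-, -, -, -, -, -, ho⟩ := hT2 _ _ _ _ _ h2
    rcases hneg with ⟨h, -⟩ | ⟨h, -⟩
    · exact hc h
    · exact ho h
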